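/- If f : ℕ → ℕ is strictly increasing and we define f'(0) = 0 and f'(n) = f(n²) for n ≥ 1, then for every infinite set x ⊆ ℕ whose increasing enumeration e satisfies e(n) ≤ f(n) for infinitely many n, there exists an n such that the interval [f'(n), f'(n+1)) contains at least 3 elements of x. -/

import Mathlib

/-- If `f` is strictly increasing, `f'(0) = 0`, `f'(n) = f(n²)` for `n ≥ 1`, and `e` is the
increasing enumeration of an infinite set with `e(n) ≤ f(n)` infinitely often, then some
interval `[f'(n), f'(n+1))` contains at least 3 elements of the set. -/
theorem stmt_0 (f e : ℕ → ℕ) (hf : StrictMono f) (he : StrictMono e)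
    (hinf : {n : ℕ | e n ≤ f n}.Infinite)
    (f' : ℕ → ℕ) (hf'0 : f' 0 = 0) (hf' : ∀ n ≥ 1, f' n = f (n ^ 2)) :
    ∃ n : ℕ, 3 ≤ {k : ℕ | f' n ≤ e k ∧ e k < f' (n + 1)}.ncard := by
  by_contra h
  push_neg at h
  obtain ⟨n, hne, hn16⟩ := hinf.exists_gt 15
  simp only [Set.mem_setOf_eq] at hne
  set s := Nat.sqrt n with hs
  set m := s + 1 with hm
  have hs4 : 4 ≤ s := Nat.le_sqrt.mpr (by omega)
  have hss : s * s ≤ n := by have := Nat.sqrt_le' n; nlinarith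
  have hnm : n ≤ m ^ 2 := by
    have := Nat.lt_succ_sqrt n
    have : n < m * m := this
    nlinarith
  have hfm : ∀ k ≤ n, e k < f' (m + 1) := by
    intro k hk
    have h1 : e k ≤ f n := le_trans (he.monotone hk) hne
    have h2 : f n ≤ f (m ^ 2) := hf.monotone hnm
    have h3 : f (m ^ 2) < f ((m + 1) ^ 2) := hf (by nlinarith)
    rw [hf' (m + 1) (by omega)]
    omega
  set J : ℕ → ℕ := fun k => Nat.findGreatest (fun j => f' j ≤ e k) m with hJ
  have hJm : ∀ k, J k ≤ m := fun k => Nat.findGreatest_le m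
  have hJle : ∀ k, f' (J k) ≤ e k := fun k =>
    Nat.findGreatest_spec (P := fun j => f' j ≤ e k) (Nat.zero_le m)
      (by show f' 0 ≤ e k; simp [hf'0])
  have hJlt : ∀ k ≤ n, e k < f' (J k + 1) := by
    intro k hk
    by_contra hc
    push_neg at hc
    rcases lt_or_eq_of_le (hJm k) with hlt | heq
    · exact Nat.findGreatest_is_greatest (P := fun j => f' j ≤ e k)
        (Nat.lt_succ_self _) hlt hc
    · rw [heq] at hc
      exact absurd (hfm k hk) (not_lt.mpr hc)
  have key : (Finset.range (n + 1)).card ≤ 2 * ((Finset.range (n + 1)).image J).card := by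
    apply Finset.card_le_mul_card_image
    intro a _
    have hsub : (((Finset.range (n + 1)).filter fun k => J k = a : Finset ℕ) : Set ℕ) ⊆
        {k : ℕ | f' a ≤ e k ∧ e k < f' (a + 1)} := by
      intro k hk
      simp only [Finset.coe_filter, Finset.mem_range, Set.mem_setOf_eq] at hk
      obtain ⟨hk1, hk2⟩ := hk
      subst hk2
      exact ⟨hJle k, hJlt k (by omega)⟩
    have hfin : {k : ℕ | f' a ≤ e k ∧ e k < f' (a + 1)}.Finite := by
      apply Set.Finite.subset (Set.finite_Iio (f' (a + 1)))
      intro k hk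
      have : k ≤ e k := he.le_apply
      exact lt_of_le_of_lt this hk.2
    have := Set.ncard_le_ncard hsub hfin
    rw [Set.ncard_coe_finset] at this
    have ha := h a
    omega
  have himg : ((Finset.range (n + 1)).image J) ⊆ Finset.range (m + 1) := by
    intro a ha
    simp only [Finset.mem_image, Finset.mem_range] at ha ⊢
    obtain ⟨k, _, hk⟩ := ha
    have := hJm k
    omega
  have := Finset.card_le_card himg
  simp only [Finset.card_range] at key this
  nlinarith
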